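/- Let a ∈ ℝ and let λ > 0, μ > 0. Then the limit as α → 1 of (4/(1−α²))·( ((1−α)/2)·λ^a + ((1+α)/2)·μ^a − ( ((1−α)/2)·λ + ((1+α)/2)·μ )^a ) exists and equals (a−1)·μ^a − a·λ·μ^{a−1} + λ^a. -/

import Mathlib

open Filter Real

/-- As α → 1, the closed-form α-divergence building block converges to the
closed-form dual Kullback–Leibler building block. -/
theorem alpha_div_tendsto_dual_kl (a l m : ℝ) (hl : 0 < l) (hm : 0 < m) :
    Filter.Tendsto
      (fun α : ℝ => (4 / (1 - α ^ 2)) *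
        (((1 - α) / 2) * l ^ a + ((1 + α) / 2) * m ^ a
          - (((1 - α) / 2) * l + ((1 + α) / 2) * m) ^ a))
      (nhdsWithin 1 {(1:ℝ)}ᶜ)
      (nhds ((a - 1) * m ^ a - a * l * m ^ (a - 1) + l ^ a)) := by
  set g : ℝ → ℝ := fun α => ((1 - α) / 2) * l ^ a + ((1 + α) / 2) * m ^ a
      - (((1 - α) / 2) * l + ((1 + α) / 2) * m) ^ a with hg
  have hval : ((1 - (1:ℝ)) / 2) * l + ((1 + (1:ℝ)) / 2) * m = m := by ring
  have hinner : HasDerivAt (fun α : ℝ => ((1 - α) / 2) * l + ((1 + α) / 2) * m)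
      ((m - l) / 2) 1 := by
    have h : HasDerivAt (fun α : ℝ => ((1 - α) / 2) * l + ((1 + α) / 2) * m)
        (((0 - 1) / 2) * l + ((0 + 1) / 2) * m) 1 := by
      apply HasDerivAt.add
      · exact (((hasDerivAt_const (1:ℝ) (1:ℝ)).sub (hasDerivAt_id 1)).div_const 2).mul_const l
      · exact (((hasDerivAt_const (1:ℝ) (1:ℝ)).add (hasDerivAt_id 1)).div_const 2).mul_const m
    convert h using 1; ring
  have hpow : HasDerivAt (fun α : ℝ => (((1 - α) / 2) * l + ((1 + α) / 2) * m) ^ a)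
      ((m - l) / 2 * a * m ^ (a - 1)) 1 := by
    have h := hinner.rpow_const (p := a) (Or.inl (by rw [hval]; exact hm.ne'))
    rwa [hval] at h
  have hgd : HasDerivAt g
      ((-1 / 2) * l ^ a + (1 / 2) * m ^ a - (m - l) / 2 * a * m ^ (a - 1)) 1 := by
    apply HasDerivAt.sub _ hpow
    have h : HasDerivAt (fun α : ℝ => ((1 - α) / 2) * l ^ a + ((1 + α) / 2) * m ^ a)
        (((0 - 1) / 2) * l ^ a + ((0 + 1) / 2) * m ^ a) 1 := by
      apply HasDerivAt.add
      · exact (((hasDerivAt_const (1:ℝ) (1:ℝ)).sub (hasDerivAt_id 1)).div_const 2).mul_const _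
      · exact (((hasDerivAt_const (1:ℝ) (1:ℝ)).add (hasDerivAt_id 1)).div_const 2).mul_const _
    exact h.congr_deriv (by ring)
  have hg1 : g 1 = 0 := by simp only [hg, hval]; ring
  have hslope : Tendsto (slope g 1) (nhdsWithin 1 {(1:ℝ)}ᶜ)
      (nhds ((-1 / 2) * l ^ a + (1 / 2) * m ^ a - (m - l) / 2 * a * m ^ (a - 1))) :=
    hasDerivAt_iff_tendsto_slope.mp hgd
  have hq : Tendsto (fun α : ℝ => -4 / (1 + α)) (nhdsWithin 1 {(1:ℝ)}ᶜ) (nhds (-2)) := by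
    have hc : ContinuousAt (fun α : ℝ => -4 / (1 + α)) 1 := by
      apply ContinuousAt.div (by fun_prop) (by fun_prop)
      norm_num
    have ht := hc.tendsto.mono_left (nhdsWithin_le_nhds (s := {(1:ℝ)}ᶜ))
    norm_num at ht
    exact ht
  have hmul := hslope.mul hq
  have key : m ^ (a - 1) * m = m ^ a := by
    rw [← Real.rpow_add_one hm.ne']; norm_num
  have hlim : ((-1 / 2) * l ^ a + (1 / 2) * m ^ a - (m - l) / 2 * a * m ^ (a - 1)) * (-2)
      = (a - 1) * m ^ a - a * l * m ^ (a - 1) + l ^ a := by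
    linear_combination a * key
  rw [← hlim]
  apply hmul.congr'
  filter_upwards [self_mem_nhdsWithin] with α hα
  have hα1 : α - 1 ≠ 0 := sub_ne_zero.mpr hα
  by_cases h2 : 1 + α = 0
  · have hsq : 1 - α ^ 2 = 0 := by nlinarith [sq_nonneg (1 + α)]
    simp [h2, hsq]
  · have hsq : 1 - α ^ 2 ≠ 0 := by
      intro h
      have h' : (1 - α) * (1 + α) = 0 := by linear_combination h
      rcases mul_eq_zero.mp h' with h1 | h1
      · exact hα1 (by linarith)
      · exact h2 h1
    rw [slope_def_field, hg1, sub_zero]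
    simp only [hg]
    field_simp
    ring
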